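/- Let M ≥ 2, K ≥ 0 and N = K + 2M. Let J̃ be the N×N real block matrix with blocks ((O_M, I_M, O_{M,K}), (−I_M, O_M, O_{M,K}), (O_{K,M}, O_{K,M}, O_K)), i.e., the canonical Lie–Darboux Poisson matrix with M canonical pairs and K Casimir directions. Then J̃ does NOT satisfy the relation J̃_{ij} J̃_{mk} + J̃_{jk} J̃_{mi} + J̃_{ki} J̃_{mj} = 0 for all indices i,j,k,m; in particular, taking i = 1, j = M+1, m = 2 in that relation would force J̃_{2,k} = 0 for all k, contradicting J̃_{2,M+2} = 1. -/
import Mathlib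


/-- The canonical Lie–Darboux Poisson matrix on `ℝ^N`, `N = K + 2M`, with `M` canonical
pairs and `K` Casimir (zero) directions: block form
`((O_M, I_M, O_{M,K}), (−I_M, O_M, O_{M,K}), (O_{K,M}, O_{K,M}, O_K))`.
Indices `0,…,M-1` are the `q`'s, `M,…,2M-1` the `p`'s and the rest the Casimir
directions. -/
def JDarboux (M K : ℕ) : Matrix (Fin (K + 2 * M)) (Fin (K + 2 * M)) ℝ := fun i j =>
  if i.1 < M ∧ j.1 = i.1 + M then 1
  else if j.1 < M ∧ i.1 = j.1 + M then -1
  else 0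

/-- for `M ≥ 2`, the canonical Lie–Darboux Poisson matrix with `M` canonical
pairs and `K` Casimir directions does NOT satisfy the Plücker-type relation
`J̃_{ij}J̃_{mk} + J̃_{jk}J̃_{mi} + J̃_{ki}J̃_{mj} = 0` for all indices. -/
theorem statement9 (M K : ℕ) (hM : 2 ≤ M) :
    ¬ (∀ i j k m : Fin (K + 2 * M),
      JDarboux M K i j * JDarboux M K m k + JDarboux M K j k * JDarboux M K m i
        + JDarboux M K k i * JDarboux M K m j = 0) := by
  intro h
  have h0 : (0 : ℕ) < K + 2 * M := by omega
  have h1 : (1 : ℕ) < K + 2 * M := by omega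
  have hM' : M < K + 2 * M := by omega
  have hM1 : M + 1 < K + 2 * M := by omega
  have := h ⟨0, h0⟩ ⟨M, hM'⟩ ⟨M + 1, hM1⟩ ⟨1, h1⟩
  simp only [JDarboux] at this
  rw [if_pos ⟨by omega, by omega⟩] at this  -- J_{0,M} = 1
  rw [if_pos ⟨by omega, by omega⟩] at this  -- J_{1,M+1} = 1
  rw [if_neg (by omega), if_neg (by omega)] at this -- J_{M,M+1}=0
  rw [if_neg (by omega), if_neg (by omega)] at this -- J_{1,0}=0
  rw [if_neg (by omega), if_neg (by omega)] at this -- J_{M+1,0}=0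
  rw [if_neg (by omega), if_neg (by omega)] at this -- J_{1,M}=0
  norm_num at this
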